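/- arXiv:2107.03826 — 6 statements merged into one kernel-verified Lean document; each statement's English description precedes it below -/
import Mathlib

section
/- The smoothed loss ρ(x) = √(1+x²) is convex, continuously differentiable, its derivative ψ(x) = x/√(1+x²) is 1-Lipschitz, and ψ'(x) + ψ(x)² ≥ 23/27 for all x ∈ ℝ. -/
/-- The smoothed Huber loss `ρ(x) = √(1 + x²)`. -/
noncomputable def smoothLoss (x : ℝ) : ℝ := Real.sqrt (1 + x ^ 2)

/-- Its derivative `ψ(x) = x / √(1 + x²)`. -/
noncomputable def smoothLossDeriv (x : ℝ) : ℝ := x / Real.sqrt (1 + x ^ 2)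

lemma sq_sqrt' (x : ℝ) : Real.sqrt (1 + x ^ 2) ^ 2 = 1 + x ^ 2 :=
  Real.sq_sqrt (by positivity)

lemma one_le_s (x : ℝ) : 1 ≤ Real.sqrt (1 + x ^ 2) := by
  nlinarith [sq_sqrt' x, Real.sqrt_nonneg (1 + x ^ 2), sq_nonneg x,
    sq_nonneg (Real.sqrt (1 + x ^ 2) - 1)]

lemma s_pos (x : ℝ) : 0 < Real.sqrt (1 + x ^ 2) :=
  lt_of_lt_of_le one_pos (one_le_s x)

lemma hasDeriv1 (x : ℝ) : HasDerivAt smoothLoss (smoothLossDeriv x) x := by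
  have h1 : HasDerivAt (fun x : ℝ => 1 + x ^ 2) (2 * x) x := by
    simpa using ((hasDerivAt_pow 2 x).const_add 1)
  have h2 := (Real.hasDerivAt_sqrt (x := 1 + x ^ 2) (by positivity)).comp x h1
  convert h2 using 1
  · rfl
  · rfl
  · rfl
  unfold smoothLossDeriv
  field_simp

lemma hasDeriv2 (x : ℝ) :
    HasDerivAt smoothLossDeriv (1 / Real.sqrt (1 + x ^ 2) ^ 3) x := by
  have hs := s_pos x
  have h := (hasDerivAt_id x).div (hasDeriv1 x) (ne_of_gt hs)
  convert h using 1
  · rfl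
  · rfl
  · rfl
  unfold smoothLoss smoothLossDeriv
  have h2 := sq_sqrt' x
  field_simp
  simp only [id_eq]
  nlinarith [h2]

lemma deriv2 (x : ℝ) : deriv smoothLossDeriv x = 1 / Real.sqrt (1 + x ^ 2) ^ 3 :=
  (hasDeriv2 x).deriv

/-- `ρ(x) = √(1+x²)` is convex, continuously differentiable, its derivative
`ψ` is `1`-Lipschitz, and `ψ'(x) + ψ(x)² ≥ 23/27` for all `x`. -/
theorem stmt3 :
    ConvexOn ℝ Set.univ smoothLoss ∧
    (∀ x : ℝ, HasDerivAt smoothLoss (smoothLossDeriv x) x) ∧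
    Continuous smoothLossDeriv ∧
    LipschitzWith 1 smoothLossDeriv ∧
    (∀ x : ℝ, deriv smoothLossDeriv x + smoothLossDeriv x ^ 2 ≥ 23 / 27) := by
  have hdiff1 : Differentiable ℝ smoothLoss := fun x => (hasDeriv1 x).differentiableAt
  have hdiff2 : Differentiable ℝ smoothLossDeriv := fun x => (hasDeriv2 x).differentiableAt
  have hcont : Continuous smoothLossDeriv := hdiff2.continuous
  have hmono : Monotone smoothLossDeriv := by
    apply StrictMono.monotone
    apply strictMono_of_deriv_pos
    intro x
    rw [deriv2]
    positivity
  refine ⟨?_, hasDeriv1, hcont, ?_, ?_⟩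
  · apply MonotoneOn.convexOn_of_deriv convex_univ hdiff1.continuous.continuousOn
      (hdiff1.differentiableOn)
    intro x _ y _ hxy
    rw [(hasDeriv1 x).deriv, (hasDeriv1 y).deriv]
    exact hmono hxy
  · apply lipschitzWith_of_nnnorm_deriv_le hdiff2
    intro x
    rw [← NNReal.coe_le_coe, coe_nnnorm, NNReal.coe_one, Real.norm_eq_abs, deriv2]
    have h1 := one_le_s x
    have h3 : (1:ℝ) ^ 3 ≤ Real.sqrt (1 + x ^ 2) ^ 3 :=
      pow_le_pow_left₀ (by norm_num) h1 3
    rw [abs_of_nonneg (by positivity), div_le_one (by positivity)]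
    linarith [h3]
  · intro x
    rw [deriv2]
    unfold smoothLossDeriv
    set s := Real.sqrt (1 + x ^ 2) with hs
    have h1 : 1 ≤ s := one_le_s x
    have h2 : s ^ 2 = 1 + x ^ 2 := sq_sqrt' x
    rw [ge_iff_le, div_pow]
    rw [div_add_div _ _ (by positivity : (s:ℝ)^3 ≠ 0) (by positivity : (s:ℝ)^2 ≠ 0)]
    rw [le_div_iff₀ (by positivity)]
    have hx : x ^ 2 = s ^ 2 - 1 := by linarith
    have h4 : s ^ 3 * x ^ 2 = s ^ 5 - s ^ 3 := by rw [hx]; ring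
    nlinarith [mul_nonneg (mul_nonneg (sq_nonneg s) (sq_nonneg (2 * s - 3)))
      (by linarith : (0:ℝ) ≤ s + 3), h4]
end

section
/- Let D ∈ ℝ^{n×n} be diagonal with entries in [0, L], X ∈ ℝ^{n×p}, and G ∈ ℝ^{p×p} symmetric positive definite with G ⪰ τ I_p for τ > 0. Define M = (Xᵀ D X + n G)^{-1}. Then ‖D X M‖_op ≤ (1/2) L^{1/2} (nτ)^{-1/2} and M ⪯ (nτ)^{-1} I_p. -/
open Matrix

/-- Euclidean norm of a vector in `ℝ^n`. -/
noncomputable def euclNorm {n : ℕ} (v : Fin n → ℝ) : ℝ := Real.sqrt (∑ i, v i ^ 2)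

/-- Loewner order: `A ⪯ B` iff `B - A` is positive semidefinite. -/
def LoewnerLE {p : ℕ} (A B : Matrix (Fin p) (Fin p) ℝ) : Prop := (B - A).PosSemidef

set_option maxHeartbeats 1600000 in
/-- With `D` diagonal with entries in `[0, L]`, `G ⪰ τ I` symmetric positive definite and
`M = (XᵀDX + nG)⁻¹`, one has `‖DXM‖_op ≤ (1/2) L^{1/2} (nτ)^{-1/2}` and
`M ⪯ (nτ)⁻¹ I`. -/
theorem stmt6 {n p : ℕ} (hn : 0 < n) (L τ : ℝ) (hL : 0 < L) (hτ : 0 < τ)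
    (d : Fin n → ℝ) (hd : ∀ i, 0 ≤ d i ∧ d i ≤ L)
    (X : Matrix (Fin n) (Fin p) ℝ) (G : Matrix (Fin p) (Fin p) ℝ)
    (hGsym : G.IsSymm) (hGpd : G.PosDef)
    (hGτ : LoewnerLE (τ • (1 : Matrix (Fin p) (Fin p) ℝ)) G)
    (M : Matrix (Fin p) (Fin p) ℝ)
    (hM : M = (Xᵀ * Matrix.diagonal d * X + (n : ℝ) • G)⁻¹) :
    (∀ x : Fin p → ℝ,
        euclNorm ((Matrix.diagonal d * X * M).mulVec x)
          ≤ (1 / 2) * Real.sqrt L * (Real.sqrt ((n : ℝ) * τ))⁻¹ * euclNorm x) ∧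
    LoewnerLE M (((n : ℝ) * τ)⁻¹ • (1 : Matrix (Fin p) (Fin p) ℝ)) := by
  set c : ℝ := (n : ℝ) * τ with hc
  have hcpos : 0 < c := mul_pos (by exact_mod_cast hn) hτ
  set S := Xᵀ * Matrix.diagonal d * X with hSdef
  set A := S + (n : ℝ) • G with hAdef
  clear_value c S A
  -- S is positive semidefinite
  have hSpsd : S.PosSemidef := by
    rw [hSdef]
    have h := (Matrix.posSemidef_diagonal_iff.mpr fun i => (hd i).1).conjTranspose_mul_mul_same X
    rwa [conjTranspose_eq_transpose_of_trivial] at h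
  -- n • G is positive definite
  have hnG : ((n : ℝ) • G).PosDef := by
    refine Matrix.PosDef.of_dotProduct_mulVec_pos ?_ (fun x hx => ?_)
    · rw [Matrix.IsHermitian, conjTranspose_smul, star_trivial, hGpd.1.eq]
    · rw [smul_mulVec, dotProduct_smul, smul_eq_mul]
      exact mul_pos (by exact_mod_cast hn) (hGpd.dotProduct_mulVec_pos hx)
  have hApd : A.PosDef := by
    rw [hAdef]; exact Matrix.PosDef.posSemidef_add hSpsd hnG
  have hdet : IsUnit A.det := (Matrix.isUnit_iff_isUnit_det A).mp hApd.isUnit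
  have hAM : A * M = 1 := by rw [hM]; exact Matrix.mul_nonsing_inv A hdet
  have hMherm : M.IsHermitian := by rw [hM]; exact hApd.inv.isHermitian
  -- quadratic form lower bound coming from G ⪰ τ I
  have hGq : ∀ y : Fin p → ℝ, τ * (y ⬝ᵥ y) ≤ y ⬝ᵥ G *ᵥ y := by
    intro y
    have h := Matrix.PosSemidef.dotProduct_mulVec_nonneg hGτ y
    rw [star_trivial, sub_mulVec, dotProduct_sub, smul_mulVec, dotProduct_smul,
      one_mulVec, smul_eq_mul, sub_nonneg] at h
    exact h
  -- decomposition of x ⬝ᵥ (M x)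
  have hdecomp : ∀ x : Fin p → ℝ,
      x ⬝ᵥ (M *ᵥ x)
        = (M *ᵥ x) ⬝ᵥ (S *ᵥ (M *ᵥ x)) + (n : ℝ) * ((M *ᵥ x) ⬝ᵥ (G *ᵥ (M *ᵥ x))) := by
    intro x
    have hx : A *ᵥ (M *ᵥ x) = x := by
      rw [mulVec_mulVec, hAM, one_mulVec]
    calc x ⬝ᵥ (M *ᵥ x) = (M *ᵥ x) ⬝ᵥ x := dotProduct_comm _ _
      _ = (M *ᵥ x) ⬝ᵥ (A *ᵥ (M *ᵥ x)) := by rw [hx]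
      _ = _ := by
          rw [hAdef, add_mulVec, dotProduct_add, smul_mulVec, dotProduct_smul, smul_eq_mul]
  -- stage: for each x, key bounds with y = M x
  have key : ∀ x : Fin p → ℝ,
      (M *ᵥ x) ⬝ᵥ (S *ᵥ (M *ᵥ x)) ≤ (∑ i, x i ^ 2) / (4 * c) ∧
      x ⬝ᵥ (M *ᵥ x) ≤ c⁻¹ * (∑ i, x i ^ 2) := by
    intro x
    set y := M *ᵥ x with hy
    set a := Real.sqrt (∑ i, x i ^ 2) with ha
    set b := Real.sqrt (∑ i, y i ^ 2) with hb
    have ha0 : 0 ≤ a := Real.sqrt_nonneg _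
    have hb0 : 0 ≤ b := Real.sqrt_nonneg _
    have ha2 : a ^ 2 = ∑ i, x i ^ 2 := Real.sq_sqrt (by positivity)
    have hb2 : b ^ 2 = ∑ i, y i ^ 2 := Real.sq_sqrt (by positivity)
    have hyy : y ⬝ᵥ y = b ^ 2 := by
      rw [hb2]; simp [dotProduct, sq]
    have hCS : x ⬝ᵥ y ≤ a * b := by
      have := Real.sum_mul_le_sqrt_mul_sqrt Finset.univ x y
      simpa [dotProduct, ha, hb] using this
    have hs0 : 0 ≤ y ⬝ᵥ (S *ᵥ y) := by simpa using hSpsd.dotProduct_mulVec_nonneg y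
    have hGy : c * b ^ 2 ≤ (n : ℝ) * (y ⬝ᵥ (G *ᵥ y)) := by
      have h1 := hGq y
      rw [hyy] at h1
      have hn' : (0 : ℝ) ≤ (n : ℝ) := by positivity
      calc c * b ^ 2 = (n : ℝ) * (τ * b ^ 2) := by rw [hc]; ring
        _ ≤ (n : ℝ) * (y ⬝ᵥ (G *ᵥ y)) := by
            exact mul_le_mul_of_nonneg_left h1 hn'
    have hsum : y ⬝ᵥ (S *ᵥ y) + c * b ^ 2 ≤ a * b := by
      have := hdecomp x
      rw [← hy] at this
      linarith [hCS, hGy]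
    constructor
    · -- s ≤ a² / (4c)
      rw [← ha2, le_div_iff₀ (by positivity)]
      nlinarith [sq_nonneg (a - 2 * c * b), hcpos, hsum, hs0]
    · -- x ⬝ᵥ M x ≤ c⁻¹ a²
      have hv : x ⬝ᵥ y ≤ a * b := hCS
      have hvlow : c * b ^ 2 ≤ x ⬝ᵥ y := by
        have := hdecomp x
        rw [← hy] at this
        linarith
      have hv0 : 0 ≤ x ⬝ᵥ y := le_trans (by positivity) hvlow
      rw [← ha2]
      rcases hv0.eq_or_lt with h | h
      · rw [← h]
        positivity
      · -- 0 < v : from c v² ≤ a² v, conclude c v ≤ a², then v ≤ c⁻¹ a²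
        have h1 : c * (x ⬝ᵥ y) ^ 2 ≤ a ^ 2 * (x ⬝ᵥ y) := by
          nlinarith [mul_le_mul hv hv hv0 (mul_nonneg ha0 hb0),
            mul_le_mul_of_nonneg_left hvlow (sq_nonneg a)]
        have h2 : c * (x ⬝ᵥ y) ≤ a ^ 2 :=
          le_of_mul_le_mul_right (by nlinarith [h1]) h
        have h3 : x ⬝ᵥ y = c⁻¹ * (c * (x ⬝ᵥ y)) := by
          field_simp
        rw [h3]
        exact mul_le_mul_of_nonneg_left h2 (inv_nonneg.mpr hcpos.le)
  constructor
  · -- operator norm bound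
    intro x
    set y := M *ᵥ x with hy
    have hvec : (Matrix.diagonal d * X * M) *ᵥ x = fun i => d i * (X *ᵥ y) i := by
      funext i
      rw [← mulVec_mulVec, ← mulVec_mulVec, ← hy, mulVec_diagonal]
    have hquad : y ⬝ᵥ (S *ᵥ y) = ∑ i, (X *ᵥ y) i * (d i * (X *ᵥ y) i) := by
      rw [hSdef, Matrix.mul_assoc, ← mulVec_mulVec, dotProduct_mulVec, vecMul_transpose,
        ← mulVec_mulVec]
      simp [dotProduct, mulVec_diagonal]
    have hsum_le : ∑ i, ((Matrix.diagonal d * X * M) *ᵥ x) i ^ 2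
        ≤ L * (y ⬝ᵥ (S *ᵥ y)) := by
      rw [hvec, hquad, Finset.mul_sum]
      refine Finset.sum_le_sum fun i _ => ?_
      have h1 := (hd i).1
      have h2 := (hd i).2
      dsimp only
      nlinarith [sq_nonneg ((X *ᵥ y) i),
        mul_nonneg (mul_nonneg (sub_nonneg.mpr h2) h1) (sq_nonneg ((X *ᵥ y) i))]
    have hsb := (key x).1
    have hRHS0 : 0 ≤ (1 / 2) * Real.sqrt L * (Real.sqrt c)⁻¹ * euclNorm x := by
      have : 0 ≤ euclNorm x := Real.sqrt_nonneg _
      positivity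
    rw [euclNorm]
    rw [show (1 / 2) * Real.sqrt L * (Real.sqrt c)⁻¹ * euclNorm x
        = Real.sqrt (((1 / 2) * Real.sqrt L * (Real.sqrt c)⁻¹ * euclNorm x) ^ 2) from
        (Real.sqrt_sq hRHS0).symm]
    apply Real.sqrt_le_sqrt
    have hexpand : ((1 / 2) * Real.sqrt L * (Real.sqrt c)⁻¹ * euclNorm x) ^ 2
        = (1 / 4) * L * c⁻¹ * (∑ i, x i ^ 2) := by
      have hLs : Real.sqrt L ^ 2 = L := Real.sq_sqrt hL.le
      have hcs : Real.sqrt c ^ 2 = c := Real.sq_sqrt hcpos.le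
      have hxs : euclNorm x ^ 2 = ∑ i, x i ^ 2 := Real.sq_sqrt (by positivity)
      rw [mul_pow, mul_pow, mul_pow, hLs, hxs, inv_pow, hcs]
      ring
    rw [hexpand]
    calc ∑ i, ((Matrix.diagonal d * X * M) *ᵥ x) i ^ 2
        ≤ L * (y ⬝ᵥ (S *ᵥ y)) := hsum_le
      _ ≤ L * ((∑ i, x i ^ 2) / (4 * c)) := mul_le_mul_of_nonneg_left hsb hL.le
      _ = (1 / 4) * L * c⁻¹ * (∑ i, x i ^ 2) := by
          rw [div_eq_mul_inv, mul_inv]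
          ring
  · -- Loewner bound on M
    refine Matrix.PosSemidef.of_dotProduct_mulVec_nonneg ?_ (fun x => ?_)
    · rw [Matrix.IsHermitian, conjTranspose_sub, conjTranspose_smul, star_trivial,
        conjTranspose_one, hMherm.eq]
    · rw [star_trivial, sub_mulVec, dotProduct_sub, smul_mulVec, dotProduct_smul,
        one_mulVec, smul_eq_mul, sub_nonneg]
      have h := (key x).2
      have hxx : x ⬝ᵥ x = ∑ i, x i ^ 2 := by simp [dotProduct, sq]
      rw [hxx]
      exact h
end

section
/- Let D ∈ ℝ^{n×n} be diagonal with entries in [0, L], X ∈ ℝ^{n×p}, G ∈ ℝ^{p×p} symmetric with G ⪰ τ I_p for τ > 0, M = (Xᵀ D X + n G)^{-1}, and V = D - D X M Xᵀ D. Then (L τ^{-1} ‖X/√n‖_op² + 1)^{-1} D ⪯ V ⪯ D ⪯ L I_n. -/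
open Matrix

/-- Operator norm (largest singular value) of a rectangular real matrix, viewed as a
linear map between Euclidean spaces. -/
noncomputable def matOpNorm {n p : ℕ} (X : Matrix (Fin n) (Fin p) ℝ) : ℝ :=
  ‖LinearMap.toContinuousLinearMap (Matrix.toEuclideanLin X)‖

private lemma euclid_norm_sq {m : ℕ} (u : Fin m → ℝ) :
    ‖(WithLp.equiv 2 (Fin m → ℝ)).symm u‖ ^ 2 = u ⬝ᵥ u := by
  rw [EuclideanSpace.norm_eq, Real.sq_sqrt (by positivity)]
  simp [dotProduct, sq]

/-- operator norm bound on quadratic form -/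
private lemma mulVec_dot_le {n p : ℕ} (Y : Matrix (Fin n) (Fin p) ℝ) (w : Fin p → ℝ) :
    (Y *ᵥ w) ⬝ᵥ (Y *ᵥ w) ≤ matOpNorm Y ^ 2 * (w ⬝ᵥ w) := by
  have key : ‖(LinearMap.toContinuousLinearMap (Matrix.toEuclideanLin Y))
        ((WithLp.equiv 2 (Fin p → ℝ)).symm w)‖
      ≤ matOpNorm Y * ‖(WithLp.equiv 2 (Fin p → ℝ)).symm w‖ :=
    ContinuousLinearMap.le_opNorm _ _
  have happ : (LinearMap.toContinuousLinearMap (Matrix.toEuclideanLin Y))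
        ((WithLp.equiv 2 (Fin p → ℝ)).symm w)
      = (WithLp.equiv 2 (Fin n → ℝ)).symm (Y *ᵥ w) := by
    simp [LinearMap.coe_toContinuousLinearMap']
  rw [happ] at key
  have h1 := euclid_norm_sq (Y *ᵥ w)
  have h2 := euclid_norm_sq w
  have hn1 : (0:ℝ) ≤ ‖(WithLp.equiv 2 (Fin n → ℝ)).symm (Y *ᵥ w)‖ := norm_nonneg _
  have hn2 : (0:ℝ) ≤ ‖(WithLp.equiv 2 (Fin p → ℝ)).symm w‖ := norm_nonneg _
  have hN : (0:ℝ) ≤ matOpNorm Y := norm_nonneg _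
  nlinarith [key, mul_le_mul key key hn1 (by positivity)]

private lemma weighted_cs {n : ℕ} (d : Fin n → ℝ) (hd : ∀ i, 0 ≤ d i) (u v : Fin n → ℝ) :
    (∑ i, d i * u i * v i) ^ 2 ≤ (∑ i, d i * u i ^ 2) * (∑ i, d i * v i ^ 2) := by
  have h := Finset.sum_mul_sq_le_sq_mul_sq Finset.univ
    (fun i => Real.sqrt (d i) * u i) (fun i => Real.sqrt (d i) * v i)
  have e1 : ∀ i : Fin n, (Real.sqrt (d i) * u i) * (Real.sqrt (d i) * v i)
      = d i * u i * v i := by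
    intro i
    rw [show Real.sqrt (d i) * u i * (Real.sqrt (d i) * v i)
        = Real.sqrt (d i) * Real.sqrt (d i) * (u i * v i) by ring,
      Real.mul_self_sqrt (hd i)]
    ring
  have e2 : ∀ i : Fin n, (Real.sqrt (d i) * u i) ^ 2 = d i * u i ^ 2 := fun i => by
    rw [mul_pow, Real.sq_sqrt (hd i)]
  have e3 : ∀ i : Fin n, (Real.sqrt (d i) * v i) ^ 2 = d i * v i ^ 2 := fun i => by
    rw [mul_pow, Real.sq_sqrt (hd i)]
  simp only [e1, e2, e3] at h
  exact h

private lemma key_scalar (K α2 β2 r t : ℝ) (hK : 0 ≤ K) (hα : 0 ≤ α2) (hβ : 0 ≤ β2)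
    (hr : 0 ≤ r) (h1 : β2 + r ≤ t) (h2 : β2 ≤ K * r) (h3 : t ^ 2 ≤ α2 * β2) :
    (K + 1) * t ≤ K * α2 := by
  have ht : 0 ≤ t := le_trans (by linarith) h1
  have h4 : (K + 1) * β2 ≤ K * t := by nlinarith
  rcases eq_or_lt_of_le ht with h | h
  · nlinarith
  · nlinarith [mul_le_mul_of_nonneg_left h3 (by linarith : (0:ℝ) ≤ K + 1),
      mul_le_mul_of_nonneg_left h4 hα]

private lemma dot_mulVec_eq {a b : ℕ} (A : Matrix (Fin a) (Fin b) ℝ) (u : Fin a → ℝ)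
    (v : Fin b → ℝ) : u ⬝ᵥ (A *ᵥ v) = (Aᵀ *ᵥ u) ⬝ᵥ v := by
  rw [Matrix.dotProduct_mulVec, Matrix.mulVec_transpose]

private lemma posDef_smul {m : ℕ} {A : Matrix (Fin m) (Fin m) ℝ} (hA : A.PosDef) {c : ℝ}
    (hc : 0 < c) : (c • A).PosDef := by
  refine Matrix.PosDef.of_dotProduct_mulVec_pos ?_ fun x hx => ?_
  · unfold Matrix.IsHermitian
    rw [Matrix.conjTranspose_smul, star_trivial, hA.isHermitian.eq]
  · rw [Matrix.smul_mulVec, dotProduct_smul, smul_eq_mul]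
    exact mul_pos hc (hA.dotProduct_mulVec_pos hx)

/-- With `D` diagonal with entries in `[0,L]`, `G ⪰ τ I` symmetric,
`M = (XᵀDX + nG)⁻¹` and `V = D - DXMXᵀD`, one has
`(Lτ⁻¹‖X/√n‖_op² + 1)⁻¹ D ⪯ V ⪯ D ⪯ L Iₙ`. -/
theorem stmt7 {n p : ℕ} (hn : 0 < n) (L τ : ℝ) (hL : 0 < L) (hτ : 0 < τ)
    (d : Fin n → ℝ) (hd : ∀ i, 0 ≤ d i ∧ d i ≤ L)
    (X : Matrix (Fin n) (Fin p) ℝ) (G : Matrix (Fin p) (Fin p) ℝ)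
    (hGsym : G.IsSymm)
    (hGτ : LoewnerLE (τ • (1 : Matrix (Fin p) (Fin p) ℝ)) G)
    (M : Matrix (Fin p) (Fin p) ℝ)
    (hM : M = (Xᵀ * Matrix.diagonal d * X + (n : ℝ) • G)⁻¹)
    (V : Matrix (Fin n) (Fin n) ℝ)
    (hV : V = Matrix.diagonal d - Matrix.diagonal d * X * M * Xᵀ * Matrix.diagonal d) :
    LoewnerLE ((L * τ⁻¹ * matOpNorm ((Real.sqrt (n : ℝ))⁻¹ • X) ^ 2 + 1)⁻¹ •
        Matrix.diagonal d) V ∧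
    LoewnerLE V (Matrix.diagonal d) ∧
    LoewnerLE (Matrix.diagonal d) (L • (1 : Matrix (Fin n) (Fin n) ℝ)) := by
  have hd0 : ∀ i, 0 ≤ d i := fun i => (hd i).1
  set D : Matrix (Fin n) (Fin n) ℝ := Matrix.diagonal d with hD
  have hDpsd : D.PosSemidef := Matrix.posSemidef_diagonal_iff.mpr hd0
  set A : Matrix (Fin p) (Fin p) ℝ := Xᵀ * D * X + (n : ℝ) • G with hA
  have hDt : Dᵀ = D := by rw [hD]; exact Matrix.diagonal_transpose d
  have hXDX : (Xᵀ * D * X).PosSemidef := by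
    have h := hDpsd.conjTranspose_mul_mul_same X
    simpa using h
  have hτ1 : ((τ : ℝ) • (1 : Matrix (Fin p) (Fin p) ℝ)).PosDef := by
    have e : (τ • (1 : Matrix (Fin p) (Fin p) ℝ)) = Matrix.diagonal (fun _ => τ) := by
      ext i j
      rcases eq_or_ne i j with rfl | h
      · simp
      · simp [Matrix.diagonal_apply_ne _ h, Matrix.one_apply_ne h]
    rw [e]
    exact Matrix.posDef_diagonal_iff.mpr fun _ => hτ
  have hGpd : G.PosDef := by
    have h : (G - τ • (1 : Matrix (Fin p) (Fin p) ℝ)).PosSemidef := hGτ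
    have e : G = (G - τ • (1 : Matrix (Fin p) (Fin p) ℝ)) + τ • 1 := by abel
    rw [e]
    exact Matrix.PosDef.posSemidef_add h hτ1
  have hApos : A.PosDef :=
    Matrix.PosDef.posSemidef_add hXDX (posDef_smul hGpd (by exact_mod_cast hn))
  have hdet : IsUnit A.det := isUnit_iff_ne_zero.mpr hApos.det_pos.ne'
  have hAM : A * M = 1 := by rw [hM]; exact Matrix.mul_nonsing_inv _ hdet
  have hMpsd : M.PosSemidef := by rw [hM]; exact hApos.posSemidef.inv
  -- the congruence term
  have hP : (D * X * M * Xᵀ * D).PosSemidef := by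
    have h := hMpsd.conjTranspose_mul_mul_same (Xᵀ * D)
    have e : (Xᵀ * D)ᴴ = D * X := by simp [Matrix.conjTranspose_mul, hD]
    rw [e] at h
    have e2 : D * X * M * (Xᵀ * D) = D * X * M * Xᵀ * D := by
      simp [Matrix.mul_assoc]
    rwa [e2] at h
  refine ⟨?_, ?_, ?_⟩
  · -- hard part
    set N : ℝ := matOpNorm ((Real.sqrt (n : ℝ))⁻¹ • X) with hNdef
    have hN0 : 0 ≤ N := norm_nonneg _
    set K : ℝ := L * τ⁻¹ * N ^ 2 with hKdef
    have hK0 : 0 ≤ K := by positivity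
    have hK1 : (0:ℝ) < K + 1 := by linarith
    set c : ℝ := (K + 1)⁻¹ with hcdef
    show ((V - c • D)).PosSemidef
    refine Matrix.PosSemidef.of_dotProduct_mulVec_nonneg ?_ ?_
    · -- Hermitian
      have h1 : D.IsHermitian := hDpsd.isHermitian
      have h3 : (c • D).IsHermitian := by
        unfold Matrix.IsHermitian
        rw [Matrix.conjTranspose_smul, star_trivial, h1.eq]
      rw [hV]
      exact (h1.sub hP.isHermitian).sub h3
    intro x
    rw [star_trivial]
    set b : Fin p → ℝ := Xᵀ *ᵥ (D *ᵥ x) with hb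
    set w : Fin p → ℝ := M *ᵥ b with hw
    set y : Fin n → ℝ := X *ᵥ w with hy
    set α2 : ℝ := ∑ i, d i * x i ^ 2 with hα2def
    set β2 : ℝ := ∑ i, d i * y i ^ 2 with hβ2def
    set s : ℝ := w ⬝ᵥ w with hsdef
    set gq : ℝ := w ⬝ᵥ (G *ᵥ w) with hgqdef
    set t : ℝ := b ⬝ᵥ w with htdef
    have hα2 : 0 ≤ α2 := Finset.sum_nonneg fun i _ => mul_nonneg (hd0 i) (sq_nonneg _)
    have hβ2 : 0 ≤ β2 := Finset.sum_nonneg fun i _ => mul_nonneg (hd0 i) (sq_nonneg _)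
    have hs0 : 0 ≤ s := Finset.sum_nonneg fun i _ => mul_self_nonneg _
    -- E0 : weighted quadratic forms of the diagonal matrix
    have E0 : ∀ u : Fin n → ℝ, u ⬝ᵥ (D *ᵥ u) = ∑ i, d i * u i ^ 2 := by
      intro u
      simp only [hD, dotProduct, Matrix.mulVec_diagonal]
      exact Finset.sum_congr rfl fun i _ => by ring
    -- E1 : the quadratic form of the correction term
    have E1 : x ⬝ᵥ ((D * X * M * Xᵀ * D) *ᵥ x) = t := by
      have e : (D * X * M * Xᵀ * D) *ᵥ x = D *ᵥ (X *ᵥ w) := by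
        simp only [← Matrix.mulVec_mulVec, hw, hb]
      rw [e, dot_mulVec_eq, hDt, dot_mulVec_eq]
    -- t as the A-quadratic form of w
    have hAw : A *ᵥ w = b := by rw [hw, Matrix.mulVec_mulVec, hAM, Matrix.one_mulVec]
    have E2 : t = β2 + (n : ℝ) * gq := by
      have e1 : t = w ⬝ᵥ (A *ᵥ w) := by rw [hAw, dotProduct_comm]
      rw [e1, hA, Matrix.add_mulVec, dotProduct_add, Matrix.smul_mulVec,
        dotProduct_smul, smul_eq_mul]
      congr 1
      have e2 : (Xᵀ * D * X) *ᵥ w = Xᵀ *ᵥ (D *ᵥ y) := by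
        simp only [← Matrix.mulVec_mulVec, hy]
      rw [e2, dot_mulVec_eq, Matrix.transpose_transpose, ← hy, E0 y]
    -- G lower bound
    have E3 : τ * s ≤ gq := by
      have h := Matrix.PosSemidef.dotProduct_mulVec_nonneg hGτ w
      rw [star_trivial, Matrix.sub_mulVec, dotProduct_sub, Matrix.smul_mulVec,
        Matrix.one_mulVec, dotProduct_smul, smul_eq_mul] at h
      rw [hgqdef, hsdef]
      linarith
    -- Cauchy-Schwarz
    have E4 : t ^ 2 ≤ α2 * β2 := by
      have e : t = ∑ i, d i * x i * y i := by
        rw [htdef, hb, ← dot_mulVec_eq X (D *ᵥ x) w, ← hy]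
        simp only [hD, dotProduct, Matrix.mulVec_diagonal]
        try exact Finset.sum_congr rfl fun i _ => by ring
      rw [e, hα2def, hβ2def]
      exact weighted_cs d hd0 x y
    -- operator norm bound
    have E5 : β2 ≤ L * (y ⬝ᵥ y) := by
      have e : y ⬝ᵥ y = ∑ i, y i ^ 2 := by
        simp only [dotProduct]
        exact Finset.sum_congr rfl fun i _ => by ring
      rw [e, hβ2def, Finset.mul_sum]
      exact Finset.sum_le_sum fun i _ =>
        mul_le_mul_of_nonneg_right (hd i).2 (sq_nonneg _)
    have E6 : y ⬝ᵥ y ≤ (n : ℝ) * N ^ 2 * s := by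
      have h := mulVec_dot_le ((Real.sqrt (n : ℝ))⁻¹ • X) w
      rw [Matrix.smul_mulVec, smul_dotProduct, dotProduct_smul, ← hy, ← hNdef,
        ← hsdef, smul_eq_mul, smul_eq_mul] at h
      have hnpos : (0 : ℝ) < (n : ℝ) := by exact_mod_cast hn
      have hsq : (Real.sqrt (n : ℝ))⁻¹ * ((Real.sqrt (n : ℝ))⁻¹ * (y ⬝ᵥ y))
          = (y ⬝ᵥ y) / (n : ℝ) := by
        rw [show (Real.sqrt (n:ℝ))⁻¹ * ((Real.sqrt (n:ℝ))⁻¹ * (y ⬝ᵥ y))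
            = (y ⬝ᵥ y) / (Real.sqrt (n:ℝ) * Real.sqrt (n:ℝ)) by
          field_simp, Real.mul_self_sqrt hnpos.le]
      rw [hsq, div_le_iff₀ hnpos] at h
      calc y ⬝ᵥ y ≤ N ^ 2 * s * (n : ℝ) := h
        _ = (n : ℝ) * N ^ 2 * s := by ring
    -- assemble the scalar inequality
    have hnpos : (0 : ℝ) < (n : ℝ) := by exact_mod_cast hn
    have key : (K + 1) * t ≤ K * α2 := by
      refine key_scalar K α2 β2 ((n : ℝ) * τ * s) t hK0 hα2 hβ2
        (by positivity) ?_ ?_ E4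
      · have : (n : ℝ) * (τ * s) ≤ (n : ℝ) * gq :=
          mul_le_mul_of_nonneg_left E3 hnpos.le
        rw [E2]; nlinarith
      · have h1 : β2 ≤ L * ((n : ℝ) * N ^ 2 * s) :=
          le_trans E5 (mul_le_mul_of_nonneg_left E6 hL.le)
        have h2 : K * ((n : ℝ) * τ * s) = L * ((n : ℝ) * N ^ 2 * s) := by
          rw [hKdef]
          field_simp
        rw [h2]; exact h1
    -- conclude
    have egoal : x ⬝ᵥ ((V - c • D) *ᵥ x) = α2 - t - c * α2 := by
      rw [Matrix.sub_mulVec, dotProduct_sub, hV, Matrix.sub_mulVec, dotProduct_sub,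
        E1, E0 x, Matrix.smul_mulVec, dotProduct_smul, smul_eq_mul, E0 x]
    rw [egoal]
    have h5 : (K + 1) * (c * α2) = α2 := by
      rw [show (K + 1) * (c * α2) = ((K + 1) * c) * α2 by ring, hcdef,
        mul_inv_cancel₀ hK1.ne', one_mul]
    have h6 : 0 ≤ (K + 1) * (α2 - t - c * α2) := by nlinarith
    have h7 := div_nonneg h6 hK1.le
    rwa [mul_div_cancel_left₀ _ hK1.ne'] at h7
  · show (D - V).PosSemidef
    rw [hV, sub_sub_cancel]
    exact hP
  · show (L • 1 - D).PosSemidef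
    have e : L • (1 : Matrix (Fin n) (Fin n) ℝ) - D = Matrix.diagonal (fun i => L - d i) := by
      ext i j
      rcases eq_or_ne i j with rfl | h
      · simp [hD]
      · simp [hD, Matrix.diagonal_apply_ne _ h, Matrix.one_apply_ne h]
    rw [e]
    exact Matrix.posSemidef_diagonal_iff.mpr fun i => sub_nonneg.mpr (hd i).2
end

section
/- Let ρ : ℝ → ℝ be convex C¹ with L-Lipschitz derivative ψ, and let g, g̃ : ℝ^p → ℝ be strongly convex with parameters τ, τ̃ ≥ 0 respectively with τ + τ̃ > 0. Fix y ∈ ℝ^n, X ∈ ℝ^{n×p} and set β̂ = argmin_b (1/n)Σᵢ ρ(yᵢ - xᵢᵀb) + g(b) and β̃ = argmin_b (1/n)Σᵢ ρ(yᵢ - xᵢᵀb) + g̃(b), with ψ̂ = ψ(y - Xβ̂) and ψ̃ = ψ(y - Xβ̃) applied componentwise. Then ((τ + τ̃)/2)‖β̃ - β̂‖₂² + (nL)^{-1}‖ψ̂ - ψ̃‖₂² ≤ 2 sup_{x∈ℝ^p} |g(x) - g̃(x)|. -/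
open Matrix Set


/-- Descent lemma: if `ρ` has `L`-Lipschitz derivative `ψ`, then
`ρ b ≤ ρ a + ψ a (b-a) + L/2 (b-a)²`. -/
lemma descent16 (ρ ψ : ℝ → ℝ) (L : NNReal)
    (hρderiv : ∀ x, HasDerivAt ρ (ψ x) x)
    (hψlip : LipschitzWith L ψ) (a b : ℝ) :
    ρ b ≤ ρ a + ψ a * (b - a) + (L : ℝ) / 2 * (b - a) ^ 2 := by
  set f : ℝ → ℝ := fun u => ρ u - ψ a * u - (L : ℝ) / 2 * (u - a) ^ 2 with hf
  have hfd : ∀ u, HasDerivAt f (ψ u - ψ a - (L : ℝ) * (u - a)) u := by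
    intro u
    have h1 : HasDerivAt (fun u : ℝ => ψ a * u) (ψ a) u := by
      simpa using (hasDerivAt_id u).const_mul (ψ a)
    have h2 : HasDerivAt (fun u : ℝ => (L : ℝ) / 2 * (u - a) ^ 2)
        ((L : ℝ) / 2 * (2 * (u - a) ^ 1 * 1)) u :=
      (((hasDerivAt_id u).sub_const a).pow 2).const_mul ((L : ℝ) / 2)
    have := ((hρderiv u).sub h1).sub h2
    exact this.congr_deriv (by ring)
  have hlb : ∀ x y : ℝ, |ψ x - ψ y| ≤ (L : ℝ) * |x - y| := by
    intro x y
    simpa [Real.dist_eq] using hψlip.dist_le_mul x y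
  have hfab : f b ≤ f a := by
    rcases le_total a b with hab | hab
    · have : AntitoneOn f (Ici a) := by
        apply antitoneOn_of_deriv_nonpos (convex_Ici a)
          (fun u _ => (hfd u).continuousAt.continuousWithinAt)
          (fun u _ => ((hfd u).differentiableAt).differentiableWithinAt)
        intro u hu
        rw [(hfd u).deriv]
        rw [interior_Ici] at hu
        have := hlb u a
        have hua : 0 ≤ u - a := by simp at hu; linarith
        rw [abs_of_nonneg hua] at this
        have := (abs_le.mp this).2
        linarith
      exact this (self_mem_Ici) hab hab
    · have : MonotoneOn f (Iic a) := by
        apply monotoneOn_of_deriv_nonneg (convex_Iic a)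
          (fun u _ => (hfd u).continuousAt.continuousWithinAt)
          (fun u _ => ((hfd u).differentiableAt).differentiableWithinAt)
        intro u hu
        rw [(hfd u).deriv]
        rw [interior_Iic] at hu
        have := hlb u a
        have hua : u - a ≤ 0 := by simp at hu; linarith
        rw [abs_of_nonpos hua] at this
        have := (abs_le.mp this).1
        linarith
      exact this hab (self_mem_Iic) hab
  have : ρ b - ψ a * b - (L : ℝ) / 2 * (b - a) ^ 2 ≤ ρ a - ψ a * a - (L:ℝ)/2 * (a-a)^2 := hfab
  nlinarith [this]

/-- Co-coercivity: for convex `ρ` with `L`-Lipschitz derivative `ψ`,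
`(1/(2L)) (ψ b - ψ a)² ≤ ρ b - ρ a - ψ a (b - a)`. -/
lemma cocoerc16 (ρ ψ : ℝ → ℝ) (L : NNReal) (hL : (0:ℝ) < L)
    (hρconv : ConvexOn ℝ Set.univ ρ)
    (hρderiv : ∀ x, HasDerivAt ρ (ψ x) x)
    (hψlip : LipschitzWith L ψ) (a b : ℝ) :
    (ψ b - ψ a) ^ 2 / (2 * (L : ℝ)) ≤ ρ b - ρ a - ψ a * (b - a) := by
  have hmono : Monotone ψ := by
    have := hρconv.monotoneOn_deriv (fun x _ => (hρderiv x).differentiableAt)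
    intro x y hxy
    have h := this (mem_univ x) (mem_univ y) hxy
    rwa [(hρderiv x).deriv, (hρderiv y).deriv] at h
  set φ : ℝ → ℝ := fun u => ρ u - ψ a * u with hφ
  have hφd : ∀ u, HasDerivAt φ (ψ u - ψ a) u := by
    intro u
    have h1 : HasDerivAt (fun u : ℝ => ψ a * u) (ψ a) u := by
      simpa using (hasDerivAt_id u).const_mul (ψ a)
    exact (hρderiv u).sub h1
  -- a is a global minimizer of φ
  have hmin : ∀ u, φ a ≤ φ u := by
    intro u
    rcases le_total a u with hau | hau
    · have : MonotoneOn φ (Ici a) := by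
        apply monotoneOn_of_deriv_nonneg (convex_Ici a)
          (fun u _ => (hφd u).continuousAt.continuousWithinAt)
          (fun u _ => ((hφd u).differentiableAt).differentiableWithinAt)
        intro u hu
        rw [(hφd u).deriv]
        rw [interior_Ici] at hu
        have : ψ a ≤ ψ u := hmono (le_of_lt hu)
        linarith
      exact this self_mem_Ici hau hau
    · have : AntitoneOn φ (Iic a) := by
        apply antitoneOn_of_deriv_nonpos (convex_Iic a)
          (fun u _ => (hφd u).continuousAt.continuousWithinAt)
          (fun u _ => ((hφd u).differentiableAt).differentiableWithinAt)
        intro u hu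
        rw [(hφd u).deriv]
        rw [interior_Iic] at hu
        have : ψ u ≤ ψ a := hmono (le_of_lt hu)
        linarith
      exact this hau self_mem_Iic hau
  -- descent lemma for φ
  have hφlip : LipschitzWith L (fun u => ψ u - ψ a) := by
    intro x y
    simpa [edist_dist, Real.dist_eq, sub_sub_sub_cancel_right] using hψlip x y
  set c : ℝ := b - (ψ b - ψ a) / (L : ℝ) with hc
  have hd := descent16 φ (fun u => ψ u - ψ a) L hφd hφlip b c
  have h1 : φ a ≤ φ c := hmin c
  have hcb : c - b = -((ψ b - ψ a) / (L : ℝ)) := by rw [hc]; ring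
  rw [hcb] at hd
  have key : φ a ≤ φ b - (ψ b - ψ a) ^ 2 / (2 * (L : ℝ)) := by
    have hLne : (L : ℝ) ≠ 0 := ne_of_gt hL
    have : (ψ b - ψ a) * -((ψ b - ψ a) / (L:ℝ)) + (L:ℝ)/2 * (-((ψ b - ψ a) / (L:ℝ)))^2
        = -((ψ b - ψ a) ^ 2 / (2 * (L : ℝ))) := by field_simp; ring
    calc φ a ≤ φ c := h1
    _ ≤ φ b + (ψ b - ψ a) * -((ψ b - ψ a) / (L:ℝ)) + (L:ℝ)/2 * (-((ψ b - ψ a) / (L:ℝ)))^2 := hd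
    _ = φ b - (ψ b - ψ a) ^ 2 / (2 * (L : ℝ)) := by rw [add_assoc, this]; ring
  have : ρ a - ψ a * a ≤ ρ b - ψ a * b - (ψ b - ψ a) ^ 2 / (2 * (L : ℝ)) := key
  linarith

lemma eps16 {A C : ℝ} (hC : 0 ≤ C)
    (h : ∀ t : ℝ, 0 < t → t ≤ 1 → 0 ≤ A + t * C) : 0 ≤ A := by
  by_contra hA
  push_neg at hA
  have hC1 : (0:ℝ) < C + 1 := by linarith
  set t := min 1 (-A / (2 * (C + 1))) with htdef
  have ht0 : 0 < t := lt_min one_pos (div_pos (by linarith) (by linarith))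
  have ht1 : t ≤ 1 := min_le_left _ _
  have h2 := h t ht0 ht1
  have ht : t ≤ -A / (2 * (C + 1)) := min_le_right _ _
  have h3 : t * C ≤ (-A / (2 * (C + 1))) * C := mul_le_mul_of_nonneg_right ht hC
  have h4 : (-A / (2 * (C + 1))) * C < -A := by
    rw [div_mul_eq_mul_div, div_lt_iff₀ (by linarith)]
    nlinarith
  linarith

lemma key16 {n p : ℕ} (hn : 0 < n)
    (ρ ψ : ℝ → ℝ) (L : NNReal) (hL : (0 : ℝ) < L)
    (hρconv : ConvexOn ℝ Set.univ ρ)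
    (hρderiv : ∀ x, HasDerivAt ρ (ψ x) x)
    (hψlip : LipschitzWith L ψ)
    (g : (Fin p → ℝ) → ℝ) (τ : ℝ) (hτ : 0 ≤ τ)
    (hgconv : ConvexOn ℝ Set.univ (fun b => g b - τ / 2 * ∑ j, b j ^ 2))
    (y : Fin n → ℝ) (X : Matrix (Fin n) (Fin p) ℝ) (βh : Fin p → ℝ)
    (hβh : ∀ b : Fin p → ℝ,
      (1 / (n : ℝ)) * (∑ i, ρ (y i - X.mulVec βh i)) + g βh
        ≤ (1 / (n : ℝ)) * (∑ i, ρ (y i - X.mulVec b i)) + g b)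
    (b : Fin p → ℝ) :
    (1 / (n : ℝ)) * (∑ i, ρ (y i - X.mulVec βh i)) + g βh
      + τ / 2 * (∑ j, (b j - βh j) ^ 2)
      + (1 / (2 * (n : ℝ) * (L : ℝ))) * (∑ i, (ψ (y i - X.mulVec βh i) - ψ (y i - X.mulVec b i)) ^ 2)
      ≤ (1 / (n : ℝ)) * (∑ i, ρ (y i - X.mulVec b i)) + g b := by
  have hn0 : (0:ℝ) < (n:ℝ) := Nat.cast_pos.mpr hn
  set v : Fin p → ℝ := fun j => b j - βh j with hv
  set w : Fin n → ℝ := X.mulVec v with hw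
  have hb : b = βh + v := by funext j; simp [hv]
  have hres : ∀ i, y i - X.mulVec b i = (y i - X.mulVec βh i) - w i := by
    intro i
    rw [hb, Matrix.mulVec_add]
    simp [hw]
    ring
  set r : Fin n → ℝ := fun i => y i - X.mulVec βh i with hr
  set R : ℝ := ∑ i, ρ (r i) with hR
  set R' : ℝ := ∑ i, ρ (y i - X.mulVec b i) with hR'
  set P : ℝ := ∑ i, ψ (r i) * w i with hP
  set W : ℝ := ∑ i, (w i) ^ 2 with hW
  set D : ℝ := ∑ i, (ψ (y i - X.mulVec βh i) - ψ (y i - X.mulVec b i)) ^ 2 with hD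
  set c : (Fin p → ℝ) → ℝ := fun u => g u - τ / 2 * ∑ j, u j ^ 2 with hc
  set Sβ : ℝ := ∑ j, βh j ^ 2 with hSβ
  set Sbv : ℝ := ∑ j, βh j * v j with hSbv
  set Sv : ℝ := ∑ j, v j ^ 2 with hSv
  have hW0 : 0 ≤ W := Finset.sum_nonneg fun i _ => sq_nonneg _
  have hSv0 : 0 ≤ Sv := Finset.sum_nonneg fun j _ => sq_nonneg _
  -- (i) co-coercivity summed
  have hi : D / (2 * (L:ℝ)) ≤ R' - R + P := by
    have h1 : ∀ i ∈ Finset.univ, (ψ (y i - X.mulVec βh i) - ψ (y i - X.mulVec b i)) ^ 2 / (2 * (L:ℝ))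
        ≤ ρ (y i - X.mulVec b i) - ρ (r i) + ψ (r i) * w i := by
      intro i _
      have := cocoerc16 ρ ψ L hL hρconv hρderiv hψlip (r i) (y i - X.mulVec b i)
      have he : y i - X.mulVec b i - r i = -(w i) := by rw [hres i]; ring
      rw [he] at this
      have hsq : (ψ (y i - X.mulVec βh i) - ψ (y i - X.mulVec b i)) ^ 2
          = (ψ (y i - X.mulVec b i) - ψ (r i)) ^ 2 := by rw [hr]; ring
      rw [hsq]
      linarith
    calc D / (2 * (L:ℝ)) = ∑ i, (ψ (y i - X.mulVec βh i) - ψ (y i - X.mulVec b i)) ^ 2 / (2 * (L:ℝ)) := by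
          rw [hD, Finset.sum_div]
      _ ≤ ∑ i, (ρ (y i - X.mulVec b i) - ρ (r i) + ψ (r i) * w i) := Finset.sum_le_sum h1
      _ = R' - R + P := by rw [hR', hR, hP]; rw [Finset.sum_add_distrib, Finset.sum_sub_distrib]
  -- (ii) first-order optimality with strong convexity
  have hA : 0 ≤ (c b - c βh - (1/(n:ℝ)) * P + τ * Sbv) := by
    apply eps16 (C := ((L:ℝ)/2) * ((1/(n:ℝ)) * W) + (τ/2) * Sv)
    · positivity
    intro t ht0 ht1
    set bt : Fin p → ℝ := βh + t • v with hbt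
    have hmin := hβh bt
    -- residual of bt
    have hresbt : ∀ i, y i - X.mulVec bt i = r i - t * w i := by
      intro i
      rw [hbt, Matrix.mulVec_add, Matrix.mulVec_smul]
      simp [hr, hw]
      ring
    -- descent lemma summed
    have hdesc : (∑ i, ρ (y i - X.mulVec bt i)) ≤ R - t * P + (L:ℝ)/2 * t^2 * W := by
      have h1 : ∀ i ∈ Finset.univ, ρ (y i - X.mulVec bt i)
          ≤ ρ (r i) + ψ (r i) * (-(t * w i)) + (L:ℝ)/2 * (t * w i)^2 := by
        intro i _
        have := descent16 ρ ψ L hρderiv hψlip (r i) (r i - t * w i)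
        rw [hresbt i]
        have he : r i - t * w i - r i = -(t * w i) := by ring
        rw [he] at this
        have : ρ (r i - t * w i) ≤ ρ (r i) + ψ (r i) * (-(t * w i)) + (L:ℝ)/2 * (-(t * w i))^2 := this
        calc ρ (r i - t * w i) ≤ ρ (r i) + ψ (r i) * (-(t * w i)) + (L:ℝ)/2 * (-(t * w i))^2 := this
          _ = ρ (r i) + ψ (r i) * (-(t * w i)) + (L:ℝ)/2 * (t * w i)^2 := by ring
      calc (∑ i, ρ (y i - X.mulVec bt i))
          ≤ ∑ i, (ρ (r i) + ψ (r i) * (-(t * w i)) + (L:ℝ)/2 * (t * w i)^2) := Finset.sum_le_sum h1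
        _ = R - t * P + (L:ℝ)/2 * t^2 * W := by
            rw [Finset.sum_add_distrib, Finset.sum_add_distrib]
            have e1 : ∑ x, ψ (r x) * (-(t * w x)) = (-t) * P := by
              rw [hP, Finset.mul_sum]
              exact Finset.sum_congr rfl fun i _ => by ring
            have e2 : ∑ x, (L:ℝ)/2 * (t * w x)^2 = ((L:ℝ)/2 * t^2) * W := by
              rw [hW, Finset.mul_sum]
              exact Finset.sum_congr rfl fun i _ => by ring
            rw [e1, e2, ← hR]
            ring
    -- convexity of c
    have hconv : c bt ≤ (1 - t) * c βh + t * c b := by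
      have h1 : bt = (1 - t) • βh + t • b := by
        funext j
        simp [hbt, hv]
        ring
      rw [h1]
      exact hgconv.2 (mem_univ βh) (mem_univ b) (by linarith) (le_of_lt ht0) (by ring)
    -- sum of squares of bt
    have hsq : (∑ j, bt j ^ 2) = Sβ + 2 * t * Sbv + t^2 * Sv := by
      rw [hSβ, hSbv, hSv, Finset.mul_sum, Finset.mul_sum, ← Finset.sum_add_distrib,
        ← Finset.sum_add_distrib]
      apply Finset.sum_congr rfl
      intro j _
      simp [hbt]
      ring
    have hgbt : g bt = c bt + τ/2 * (Sβ + 2 * t * Sbv + t^2 * Sv) := by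
      rw [hc]
      simp only
      rw [hsq]
      ring
    have hgβh : g βh = c βh + τ/2 * Sβ := by
      rw [hc]; simp only [hSβ]; ring
    have hFbt : (1/(n:ℝ)) * (∑ i, ρ (y i - X.mulVec bt i))
        ≤ (1/(n:ℝ)) * (R - t * P + (L:ℝ)/2 * t^2 * W) :=
      mul_le_mul_of_nonneg_left hdesc (by positivity)
    -- combine
    have hcomb : 0 ≤ t * (c b - c βh) - t * ((1/(n:ℝ)) * P) + (L:ℝ)/2 * t^2 * ((1/(n:ℝ)) * W)
        + τ * t * Sbv + τ/2 * t^2 * Sv := by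
      have e1 : (1/(n:ℝ)) * (R - t * P + (L:ℝ)/2 * t^2 * W)
          = (1/(n:ℝ)) * R - t * ((1/(n:ℝ)) * P) + (L:ℝ)/2 * t^2 * ((1/(n:ℝ)) * W) := by ring
      rw [e1] at hFbt
      clear_value bt v w r R R' P W D c Sβ Sbv Sv
      linarith [hmin, hconv, hgbt, hgβh, hFbt]
    have e2 : t * (c b - c βh) - t * ((1/(n:ℝ)) * P) + (L:ℝ)/2 * t^2 * ((1/(n:ℝ)) * W)
        + τ * t * Sbv + τ/2 * t^2 * Sv
        = t * ((c b - c βh - (1/(n:ℝ)) * P + τ * Sbv)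
            + t * (((L:ℝ)/2) * ((1/(n:ℝ)) * W) + (τ/2) * Sv)) := by ring
    rw [e2] at hcomb
    exact nonneg_of_mul_nonneg_right hcomb ht0
  -- assemble
  have hgb : g b = c b + τ/2 * (Sβ + 2 * Sbv + Sv) := by
    have hsq : (∑ j, b j ^ 2) = Sβ + 2 * Sbv + Sv := by
      rw [hSβ, hSbv, hSv, Finset.mul_sum, ← Finset.sum_add_distrib, ← Finset.sum_add_distrib]
      apply Finset.sum_congr rfl
      intro j _
      have : b j = βh j + v j := by simp [hv]
      rw [this]; ring
    rw [hc]; simp only; rw [hsq]; ring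
  have hgβh : g βh = c βh + τ/2 * Sβ := by rw [hc]; simp only [hSβ]; ring
  have hSveq : (∑ j, (b j - βh j) ^ 2) = Sv := by rw [hSv]
  have hiscaled : (1/(n:ℝ)) * (D / (2 * (L:ℝ))) ≤ (1/(n:ℝ)) * (R' - R + P) :=
    mul_le_mul_of_nonneg_left hi (by positivity)
  have hDeq : (1 / (2 * (n : ℝ) * (L : ℝ))) * D = (1/(n:ℝ)) * (D / (2 * (L:ℝ))) := by
    rw [div_mul_div_comm, one_mul, one_div_mul_eq_div]
    congr 1
    ring
  rw [hDeq]
  have e3 : (1/(n:ℝ)) * (R' - R + P) = (1/(n:ℝ)) * R' - (1/(n:ℝ)) * R + (1/(n:ℝ)) * P := by ring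
  rw [e3] at hiscaled
  clear_value v w r R R' P W D c Sβ Sbv Sv
  linarith [hA, hiscaled, hgb, hgβh]

/-- Stability of the regularized M-estimator with respect to perturbation of the
penalty: `((τ+τ̃)/2)‖β̃-β̂‖² + (nL)⁻¹‖ψ̂-ψ̃‖² ≤ 2 sup|g - g̃|`. -/
theorem stmt16 {n p : ℕ} (hn : 0 < n)
    (ρ ψ : ℝ → ℝ) (L : NNReal) (hL : (0 : ℝ) < L)
    (hρconv : ConvexOn ℝ Set.univ ρ)
    (hρderiv : ∀ x, HasDerivAt ρ (ψ x) x)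
    (hψlip : LipschitzWith L ψ)
    (g gt : (Fin p → ℝ) → ℝ) (τ τt : ℝ) (hτ : 0 ≤ τ) (hτt : 0 ≤ τt)
    (hττt : 0 < τ + τt)
    (hgconv : ConvexOn ℝ Set.univ (fun b => g b - τ / 2 * ∑ j, b j ^ 2))
    (hgtconv : ConvexOn ℝ Set.univ (fun b => gt b - τt / 2 * ∑ j, b j ^ 2))
    (y : Fin n → ℝ) (X : Matrix (Fin n) (Fin p) ℝ)
    (βh βt : Fin p → ℝ)
    (hβh : ∀ b : Fin p → ℝ,
      (1 / (n : ℝ)) * (∑ i, ρ (y i - X.mulVec βh i)) + g βh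
        ≤ (1 / (n : ℝ)) * (∑ i, ρ (y i - X.mulVec b i)) + g b)
    (hβt : ∀ b : Fin p → ℝ,
      (1 / (n : ℝ)) * (∑ i, ρ (y i - X.mulVec βt i)) + gt βt
        ≤ (1 / (n : ℝ)) * (∑ i, ρ (y i - X.mulVec b i)) + gt b)
    (S : ℝ) (hS : ∀ x : Fin p → ℝ, |g x - gt x| ≤ S) :
    (τ + τt) / 2 * (∑ j, (βt j - βh j) ^ 2)
      + ((n : ℝ) * L)⁻¹ * (∑ i, (ψ (y i - X.mulVec βh i) - ψ (y i - X.mulVec βt i)) ^ 2)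
      ≤ 2 * S := by
  have hn0 : (0:ℝ) < (n:ℝ) := Nat.cast_pos.mpr hn
  have K1 := key16 hn ρ ψ L hL hρconv hρderiv hψlip g τ hτ hgconv y X βh hβh βt
  have K2 := key16 hn ρ ψ L hL hρconv hρderiv hψlip gt τt hτt hgtconv y X βt hβt βh
  have hSv : (∑ j, (βh j - βt j) ^ 2) = ∑ j, (βt j - βh j) ^ 2 :=
    Finset.sum_congr rfl fun j _ => by ring
  have hDsym : (∑ i, (ψ (y i - X.mulVec βt i) - ψ (y i - X.mulVec βh i)) ^ 2)
      = ∑ i, (ψ (y i - X.mulVec βh i) - ψ (y i - X.mulVec βt i)) ^ 2 :=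
    Finset.sum_congr rfl fun i _ => by ring
  rw [hSv, hDsym] at K2
  have h1 := abs_le.mp (hS βh)
  have h2 := abs_le.mp (hS βt)
  have hinv : ((n : ℝ) * L)⁻¹ * (∑ i, (ψ (y i - X.mulVec βh i) - ψ (y i - X.mulVec βt i)) ^ 2)
      = 2 * ((1 / (2 * (n : ℝ) * (L : ℝ))) * (∑ i, (ψ (y i - X.mulVec βh i) - ψ (y i - X.mulVec βt i)) ^ 2)) := by
    rw [← mul_assoc]
    congr 1
    rw [inv_eq_one_div]
    rw [mul_one_div, div_eq_div_iff (by positivity) (by positivity)]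
    ring
  rw [hinv]
  linarith [K1, K2, h1.1, h1.2, h2.1, h2.2]
end

section
/- Let ρ : ℝ → ℝ be convex C¹ with L-Lipschitz derivative ψ, and g : ℝ^p → ℝ be τ-strongly convex with τ > 0. For ε ∈ ℝ^n and X ∈ ℝ^{n×p}, define β̂(ε, X) = argmin_b (1/n)Σᵢ ρ(εᵢ - xᵢᵀ(b - β)) + g(b), h(ε, X) = β̂(ε, X) - β, and ψ̂(ε, X) = ψ(ε - X h(ε, X)) componentwise, where β ∈ ℝ^p is fixed. Then for any (ε, X) and (ε̃, X̃): nτ‖h - h̃‖₂² + L^{-1}‖ψ̂ - ψ̃‖₂² ≤ (h - h̃)ᵀ(X - X̃)ᵀψ̂ + (ε - ε̃ + X̃h - Xh)ᵀ(ψ̂ - ψ̃), where h = h(ε,X), h̃ = h(ε̃,X̃), ψ̂ = ψ̂(ε,X), ψ̃ = ψ̂(ε̃,X̃). -/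
open Matrix Filter Set Topology

private lemma coco_aux {ψ : ℝ → ℝ} {L : NNReal} (hL : (0 : ℝ) < L)
    (hmono : Monotone ψ) (hlip : LipschitzWith L ψ) {a b : ℝ} (hba : b ≤ a) :
    (L : ℝ)⁻¹ * (ψ a - ψ b) ^ 2 ≤ (ψ a - ψ b) * (a - b) := by
  have h1 : ψ b ≤ ψ a := hmono hba
  have h2 : ψ a - ψ b ≤ L * (a - b) := by
    have h := hlip.dist_le_mul a b
    rw [Real.dist_eq, Real.dist_eq, abs_of_nonneg (by linarith),
      abs_of_nonneg (by linarith)] at h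
    exact h
  have h3 : (ψ a - ψ b) ^ 2 ≤ ((L : ℝ) * (a - b)) * (ψ a - ψ b) := by nlinarith
  calc (L : ℝ)⁻¹ * (ψ a - ψ b) ^ 2
      ≤ (L : ℝ)⁻¹ * (((L : ℝ) * (a - b)) * (ψ a - ψ b)) :=
        mul_le_mul_of_nonneg_left h3 (by positivity)
    _ = (ψ a - ψ b) * (a - b) := by field_simp

private lemma coco_scalar {ψ : ℝ → ℝ} {L : NNReal} (hL : (0 : ℝ) < L)
    (hmono : Monotone ψ) (hlip : LipschitzWith L ψ) (a b : ℝ) :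
    (L : ℝ)⁻¹ * (ψ a - ψ b) ^ 2 ≤ (ψ a - ψ b) * (a - b) := by
  rcases le_total b a with hba | hab
  · exact coco_aux hL hmono hlip hba
  · have := coco_aux hL hmono hlip hab
    nlinarith [this]

private lemma opt_ineq {n p : ℕ} (hn : 0 < n)
    (ρ ψ : ℝ → ℝ) (hρderiv : ∀ x, HasDerivAt ρ (ψ x) x)
    (g : (Fin p → ℝ) → ℝ) (τ : ℝ)
    (hgconv : ConvexOn ℝ Set.univ (fun b => g b - τ / 2 * ∑ j, b j ^ 2))
    (β : Fin p → ℝ) (ε : Fin n → ℝ) (X : Matrix (Fin n) (Fin p) ℝ)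
    (h : Fin p → ℝ)
    (hmin : ∀ b : Fin p → ℝ,
      (1 / (n : ℝ)) * (∑ i, ρ (ε i - X.mulVec h i)) + g (β + h)
        ≤ (1 / (n : ℝ)) * (∑ i, ρ (ε i - X.mulVec (b - β) i)) + g b)
    (d : Fin p → ℝ) :
    g (β + h) + (1 / (n : ℝ)) * (∑ i, X.mulVec d i * ψ (ε i - X.mulVec h i))
      + τ / 2 * ∑ j, d j ^ 2 ≤ g (β + h + d) := by
  classical
  set G : (Fin p → ℝ) → ℝ := fun b => g b - τ / 2 * ∑ j, b j ^ 2 with hG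
  set φ : ℝ → ℝ := fun t =>
    (1 / (n : ℝ)) * ∑ i, ρ (ε i - X.mulVec h i - t * X.mulVec d i)
      + τ / 2 * ∑ j, ((β + h) j + t * d j) ^ 2 with hφ
  -- identity between φ and the objective
  have hpt : ∀ t : ℝ, φ t + G (β + h + t • d)
      = (1 / (n : ℝ)) * (∑ i, ρ (ε i - X.mulVec ((β + h + t • d) - β) i))
        + g (β + h + t • d) := by
    intro t
    have h1 : ∀ i, ε i - X.mulVec ((β + h + t • d) - β) i
        = ε i - X.mulVec h i - t * X.mulVec d i := by
      intro i
      rw [show (β + h + t • d) - β = h + t • d from by abel, Matrix.mulVec_add,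
        Matrix.mulVec_smul]
      simp [smul_eq_mul]
      ring
    have h3 : ∑ i, ρ (ε i - X.mulVec ((β + h + t • d) - β) i)
        = ∑ i, ρ (ε i - X.mulVec h i - t * X.mulVec d i) :=
      Finset.sum_congr rfl (fun i _ => by rw [h1 i])
    have h4 : ∑ j, ((β + h + t • d) j) ^ 2 = ∑ j, ((β + h) j + t * d j) ^ 2 :=
      Finset.sum_congr rfl (fun j _ => by simp [smul_eq_mul])
    simp only [hφ, hG]
    rw [h3, h4]
    ring
  have e0 : φ 0 + G (β + h)
      = (1 / (n : ℝ)) * (∑ i, ρ (ε i - X.mulVec h i)) + g (β + h) := by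
    have e01 : ∑ i, ρ (ε i - X.mulVec h i - (0:ℝ) * X.mulVec d i)
        = ∑ i, ρ (ε i - X.mulVec h i) :=
      Finset.sum_congr rfl (fun i _ => by norm_num)
    have e02 : ∑ j, ((β + h) j + (0:ℝ) * d j) ^ 2 = ∑ j, ((β + h) j) ^ 2 :=
      Finset.sum_congr rfl (fun j _ => by norm_num)
    simp only [hφ, hG]
    rw [e01, e02]
    ring
  have hkey : ∀ t : ℝ, φ 0 + G (β + h) ≤ φ t + G (β + h + t • d) := by
    intro t
    rw [e0, hpt t]
    exact hmin _
  -- convexity of G along the segment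
  have hGc : ∀ t ∈ Ioc (0:ℝ) 1,
      G (β + h + t • d) ≤ (1 - t) * G (β + h) + t * G (β + h + d) := by
    intro t ht
    have hc := hgconv.2 (mem_univ (β + h)) (mem_univ (β + h + d))
      (by linarith [ht.2] : (0:ℝ) ≤ 1 - t) ht.1.le (by ring)
    have hpteq : (1 - t) • (β + h) + t • (β + h + d) = β + h + t • d := by
      funext j
      simp [smul_eq_mul]
      ring
    rw [hpteq] at hc
    simpa [smul_eq_mul] using hc
  -- slope lower bound
  have hslope : ∀ t ∈ Ioc (0:ℝ) 1, G (β + h) - G (β + h + d) ≤ slope φ 0 t := by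
    intro t ht
    have h1 := hkey t
    have h2 := hGc t ht
    rw [slope_def_field]
    rw [sub_zero, le_div_iff₀ ht.1]
    nlinarith [h1, h2]
  -- derivative of φ at 0
  have hd1 : ∀ i : Fin n, HasDerivAt
      (fun t : ℝ => ρ (ε i - X.mulVec h i - t * X.mulVec d i))
      (ψ (ε i - X.mulVec h i) * (-(X.mulVec d i))) 0 := by
    intro i
    have hin : HasDerivAt (fun t : ℝ => ε i - X.mulVec h i - t * X.mulVec d i)
        (-(X.mulVec d i)) 0 := (hasDerivAt_mul_const (X.mulVec d i)).const_sub _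
    have := (hρderiv (ε i - X.mulVec h i - (0:ℝ) * X.mulVec d i)).comp 0 hin
    simpa [Function.comp_def] using this
  have hd2 : ∀ j : Fin p, HasDerivAt
      (fun t : ℝ => ((β + h) j + t * d j) ^ 2) (2 * (β + h) j * d j) 0 := by
    intro j
    have hin : HasDerivAt (fun t : ℝ => (β + h) j + t * d j) (d j) 0 :=
      (hasDerivAt_mul_const (d j)).const_add _
    simpa [Pi.pow_def] using hin.pow 2
  have hD : HasDerivAt φ
      ((1 / (n : ℝ)) * ∑ i, ψ (ε i - X.mulVec h i) * (-(X.mulVec d i))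
        + τ / 2 * ∑ j, 2 * (β + h) j * d j) 0 := by
    exact ((HasDerivAt.fun_sum (fun i _ => hd1 i)).const_mul _).add
      ((HasDerivAt.fun_sum (fun j _ => hd2 j)).const_mul _)
  have hlim : G (β + h) - G (β + h + d)
      ≤ (1 / (n : ℝ)) * ∑ i, ψ (ε i - X.mulVec h i) * (-(X.mulVec d i))
        + τ / 2 * ∑ j, 2 * (β + h) j * d j := by
    have htend := hasDerivAt_iff_tendsto_slope.mp hD
    have h2 : Tendsto (slope φ 0) (𝓝[>] (0:ℝ)) (𝓝 _) :=
      htend.mono_left (nhdsWithin_mono 0 (fun x hx =>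
        Set.mem_compl_singleton_iff.mpr (ne_of_gt hx)))
    exact ge_of_tendsto h2 (Filter.eventually_of_mem
      (Ioc_mem_nhdsGT_of_mem (by constructor <;> norm_num : (0:ℝ) ∈ Ico (0:ℝ) 1))
      hslope)
  -- algebra to conclude
  have a1 : ∑ i, ψ (ε i - X.mulVec h i) * (-(X.mulVec d i))
      = -∑ i, X.mulVec d i * ψ (ε i - X.mulVec h i) := by
    rw [← Finset.sum_neg_distrib]
    exact Finset.sum_congr rfl (fun i _ => by ring)
  have a2 : ∑ j, ((β + h + d) j) ^ 2
      = ∑ j, ((β + h) j) ^ 2 + (∑ j, 2 * (β + h) j * d j + ∑ j, d j ^ 2) := by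
    rw [← Finset.sum_add_distrib, ← Finset.sum_add_distrib]
    exact Finset.sum_congr rfl (fun j _ => by simp; ring)
  simp only [hG] at hlim
  rw [a1, a2] at hlim
  ring_nf at hlim ⊢
  linarith [hlim]

/-- Basic stability inequality for the regularized M-estimator under perturbations of
`(ε, X)`:
`nτ‖h-h̃‖² + L⁻¹‖ψ̂-ψ̃‖² ≤ (h-h̃)ᵀ(X-X̃)ᵀψ̂ + (ε-ε̃+X̃h-Xh)ᵀ(ψ̂-ψ̃)`. -/
theorem stmt17 {n p : ℕ} (hn : 0 < n)
    (ρ ψ : ℝ → ℝ) (L : NNReal) (hL : (0 : ℝ) < L)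
    (hρconv : ConvexOn ℝ Set.univ ρ)
    (hρderiv : ∀ x, HasDerivAt ρ (ψ x) x)
    (hψlip : LipschitzWith L ψ)
    (g : (Fin p → ℝ) → ℝ) (τ : ℝ) (hτ : 0 < τ)
    (hgconv : ConvexOn ℝ Set.univ (fun b => g b - τ / 2 * ∑ j, b j ^ 2))
    (β : Fin p → ℝ)
    (ε εt : Fin n → ℝ) (X Xt : Matrix (Fin n) (Fin p) ℝ)
    (h ht : Fin p → ℝ)
    (hmin : ∀ b : Fin p → ℝ,
      (1 / (n : ℝ)) * (∑ i, ρ (ε i - X.mulVec h i)) + g (β + h)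
        ≤ (1 / (n : ℝ)) * (∑ i, ρ (ε i - X.mulVec (b - β) i)) + g b)
    (hmint : ∀ b : Fin p → ℝ,
      (1 / (n : ℝ)) * (∑ i, ρ (εt i - Xt.mulVec ht i)) + g (β + ht)
        ≤ (1 / (n : ℝ)) * (∑ i, ρ (εt i - Xt.mulVec (b - β) i)) + g b) :
    (n : ℝ) * τ * (∑ j, (h j - ht j) ^ 2)
      + (L : ℝ)⁻¹ * (∑ i, (ψ (ε i - X.mulVec h i) - ψ (εt i - Xt.mulVec ht i)) ^ 2)
      ≤ (∑ j, (h j - ht j) * ((X - Xt)ᵀ.mulVec (fun i => ψ (ε i - X.mulVec h i)) j))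
        + ∑ i, (ε i - εt i + Xt.mulVec h i - X.mulVec h i) *
            (ψ (ε i - X.mulVec h i) - ψ (εt i - Xt.mulVec ht i)) := by
  classical
  have hn' : (0:ℝ) < n := by exact_mod_cast hn
  -- ψ is monotone
  have hmono : Monotone ψ := by
    have hmd := hρconv.monotoneOn_deriv (fun x _ => (hρderiv x).differentiableAt)
    intro a b hab
    have ha := (hρderiv a).deriv
    have hb := (hρderiv b).deriv
    rw [← ha, ← hb]
    exact hmd (Set.mem_univ a) (Set.mem_univ b) hab
  -- optimality inequalities
  have O1 := opt_ineq hn ρ ψ hρderiv g τ hgconv β ε X h hmin (ht - h)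
  have O2 := opt_ineq hn ρ ψ hρderiv g τ hgconv β εt Xt ht hmint (h - ht)
  rw [show β + h + (ht - h) = β + ht from by abel] at O1
  rw [show β + ht + (h - ht) = β + h from by abel] at O2
  have q1 : ∑ j, (ht - h) j ^ 2 = ∑ j, (h j - ht j) ^ 2 :=
    Finset.sum_congr rfl (fun j _ => by rw [Pi.sub_apply]; ring)
  have q2 : ∑ j, (h - ht) j ^ 2 = ∑ j, (h j - ht j) ^ 2 :=
    Finset.sum_congr rfl (fun j _ => by rw [Pi.sub_apply])
  rw [q1] at O1
  rw [q2] at O2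
  set S1 := ∑ i, X.mulVec (ht - h) i * ψ (ε i - X.mulVec h i) with hS1
  set S2 := ∑ i, Xt.mulVec (h - ht) i * ψ (εt i - Xt.mulVec ht i) with hS2
  set Q := ∑ j, (h j - ht j) ^ 2 with hQ
  have main1 : (1 / (n:ℝ)) * S1 + (1 / (n:ℝ)) * S2 + τ * Q ≤ 0 := by linarith
  have main2 : (n:ℝ) * τ * Q ≤ -S1 - S2 := by
    have hne : (n:ℝ) ≠ 0 := ne_of_gt hn'
    have e : S1 + S2 + (n:ℝ) * τ * Q
        = (n:ℝ) * ((1 / (n:ℝ)) * S1 + (1 / (n:ℝ)) * S2 + τ * Q) := by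
      field_simp
    have e2 : (n:ℝ) * ((1 / (n:ℝ)) * S1 + (1 / (n:ℝ)) * S2 + τ * Q) ≤ (n:ℝ) * 0 :=
      mul_le_mul_of_nonneg_left main1 hn'.le
    rw [mul_zero] at e2
    linarith [e ▸ e2]
  -- co-coercivity sum
  have hcosum : (L : ℝ)⁻¹ * (∑ i, (ψ (ε i - X.mulVec h i) - ψ (εt i - Xt.mulVec ht i)) ^ 2)
      ≤ ∑ i, (ψ (ε i - X.mulVec h i) - ψ (εt i - Xt.mulVec ht i))
          * ((ε i - X.mulVec h i) - (εt i - Xt.mulVec ht i)) := by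
    rw [Finset.mul_sum]
    exact Finset.sum_le_sum (fun i _ => coco_scalar hL hmono hψlip _ _)
  -- rewrite the RHS of the goal
  have t1 : (∑ j, (h j - ht j) * ((X - Xt)ᵀ.mulVec (fun i => ψ (ε i - X.mulVec h i)) j))
      = ∑ i, (X.mulVec (h - ht) i - Xt.mulVec (h - ht) i) * ψ (ε i - X.mulVec h i) := by
    have e1 : (∑ j, (h j - ht j) * ((X - Xt)ᵀ.mulVec (fun i => ψ (ε i - X.mulVec h i)) j))
        = (h - ht) ⬝ᵥ ((X - Xt)ᵀ.mulVec (fun i => ψ (ε i - X.mulVec h i))) := by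
      simp [dotProduct, Pi.sub_apply]
    rw [e1, Matrix.dotProduct_mulVec, Matrix.vecMul_transpose, Matrix.sub_mulVec]
    simp [dotProduct, Pi.sub_apply]
  have eR : (∑ j, (h j - ht j) * ((X - Xt)ᵀ.mulVec (fun i => ψ (ε i - X.mulVec h i)) j))
        + ∑ i, (ε i - εt i + Xt.mulVec h i - X.mulVec h i) *
            (ψ (ε i - X.mulVec h i) - ψ (εt i - Xt.mulVec ht i))
      = (-S1 - S2)
        + ∑ i, (ψ (ε i - X.mulVec h i) - ψ (εt i - Xt.mulVec ht i))
            * ((ε i - X.mulVec h i) - (εt i - Xt.mulVec ht i)) := by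
    rw [t1, hS1, hS2]
    simp only [← Finset.sum_neg_distrib, ← Finset.sum_sub_distrib, ← Finset.sum_add_distrib]
    apply Finset.sum_congr rfl
    intro i _
    have m1 : X.mulVec (h - ht) i = X.mulVec h i - X.mulVec ht i := by
      rw [Matrix.mulVec_sub]; simp
    have m2 : Xt.mulVec (h - ht) i = Xt.mulVec h i - Xt.mulVec ht i := by
      rw [Matrix.mulVec_sub]; simp
    have m3 : X.mulVec (ht - h) i = X.mulVec ht i - X.mulVec h i := by
      rw [Matrix.mulVec_sub]; simp
    rw [m1, m2, m3]
    ring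
  rw [eR]
  linarith [main2, hcosum]
end

section
/- Under the setup of the previous statement (ρ convex C¹ with L-Lipschitz non-decreasing derivative ψ, g τ-strongly convex, β̂, h, ψ̂ defined accordingly), for any fixed ε ∈ ℝ^n, η ∈ ℝ^n, and a ∈ ℝ^p: nτ‖β̂(ε, X + ηaᵀ) - β̂(ε, X)‖₂² + L^{-1}‖ψ̂(ε, X + ηaᵀ) - ψ̂(ε, X)‖₂² ≤ (nτ)^{-1}‖a‖₂²(ηᵀψ̂)² + L(hᵀa)²‖η‖₂², where h = h(ε,X) and ψ̂ = ψ̂(ε,X). -/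
open Matrix Filter Set

lemma amgm_aux {α u q S A : ℝ} (hα : 0 < α) (hS : 0 ≤ S) (hA : 0 ≤ A)
    (hu : u ^ 2 ≤ S * A) : u * q ≤ α / 2 * S + α⁻¹ / 2 * (A * q ^ 2) := by
  rcases hA.eq_or_lt with hA0 | hA0
  · have hu0 : u = 0 := by
      have h1 : u ^ 2 ≤ 0 := by rw [← hA0] at hu; simpa using hu
      have h2 : u ^ 2 = 0 := le_antisymm h1 (sq_nonneg u)
      exact pow_eq_zero_iff (two_ne_zero) |>.mp h2
    subst hu0
    have h1 : 0 ≤ α / 2 * S := by positivity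
    have h2 : 0 ≤ α⁻¹ / 2 * (A * q ^ 2) := by positivity
    nlinarith
  · have h : 2 * α * (u * q) ≤ α ^ 2 * S + A * q ^ 2 := by
      nlinarith [sq_nonneg (α * u - A * q), mul_le_mul_of_nonneg_left hu (le_of_lt (mul_pos hα hα)),
        hA0, mul_pos hα hA0]
    have hinv2 : α⁻¹ / 2 * (A * q ^ 2) * (2 * α) = A * q ^ 2 := by
      have hi : α⁻¹ * α = 1 := inv_mul_cancel₀ hα.ne'
      calc α⁻¹ / 2 * (A * q ^ 2) * (2 * α) = A * q ^ 2 * (α⁻¹ * α) := by ring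
        _ = A * q ^ 2 := by rw [hi, mul_one]
    nlinarith [h, hα, mul_pos hα hα, hinv2]

lemma varineq_aux {n p : ℕ} (ρ ψ : ℝ → ℝ)
    (hρderiv : ∀ x, HasDerivAt ρ (ψ x) x)
    (g : (Fin p → ℝ) → ℝ) (τ : ℝ)
    (hgconv : ConvexOn ℝ Set.univ (fun b => g b - τ / 2 * ∑ j, b j ^ 2))
    (β : Fin p → ℝ) (ε : Fin n → ℝ) (M : Matrix (Fin n) (Fin p) ℝ)
    (e d : Fin p → ℝ)
    (hmin : ∀ b : Fin p → ℝ,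
      (1 / (n : ℝ)) * (∑ i, ρ (ε i - M.mulVec e i)) + g (β + e)
        ≤ (1 / (n : ℝ)) * (∑ i, ρ (ε i - M.mulVec (b - β) i)) + g b) :
    g (β + e) - g (β + e + d) + τ / 2 * ∑ j, d j ^ 2
      ≤ (1 / (n : ℝ)) * ∑ i, ψ (ε i - M.mulVec e i) * -(M.mulVec d i) := by
  set φ : ℝ → ℝ := fun t => (1 / (n : ℝ)) * ∑ i, ρ (ε i - M.mulVec e i - t * M.mulVec d i)
    with hφdef
  have hder : HasDerivAt φ
      ((1 / (n : ℝ)) * ∑ i, ψ (ε i - M.mulVec e i) * -(M.mulVec d i)) 0 := by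
    have h1 : ∀ i : Fin n,
        HasDerivAt (fun t : ℝ => ρ (ε i - M.mulVec e i - t * M.mulVec d i))
          (ψ (ε i - M.mulVec e i) * -(M.mulVec d i)) 0 := by
      intro i
      have hinner : HasDerivAt (fun t : ℝ => ε i - M.mulVec e i - t * M.mulVec d i)
          (-(M.mulVec d i)) 0 :=
        (hasDerivAt_mul_const (M.mulVec d i)).const_sub (ε i - M.mulVec e i)
      have hc := (hρderiv (ε i - M.mulVec e i - 0 * M.mulVec d i)).comp 0 hinner
      rw [zero_mul, sub_zero] at hc
      exact hc
    exact (HasDerivAt.fun_sum (fun i _ => h1 i)).const_mul (1 / (n : ℝ))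
  have hφ0 : φ 0 = (1 / (n : ℝ)) * ∑ i, ρ (ε i - M.mulVec e i) := by
    simp [hφdef]
  have key : ∀ t : ℝ, t ∈ Set.Ioo (0 : ℝ) 1 →
      g (β + e) - g (β + e + d) + τ / 2 * (1 - t) * ∑ j, d j ^ 2 ≤ slope φ 0 t := by
    intro t ht
    obtain ⟨ht0, ht1⟩ := ht
    have hmul : ∀ i, M.mulVec (e + t • d) i = M.mulVec e i + t * M.mulVec d i := by
      intro i
      rw [Matrix.mulVec_add, Matrix.mulVec_smul]
      simp [smul_eq_mul]
    have hsub : (β + e + t • d) - β = e + t • d := by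
      funext j; simp; ring
    have hφt : φ t = (1 / (n : ℝ)) * ∑ i, ρ (ε i - M.mulVec ((β + e + t • d) - β) i) := by
      rw [hsub, hφdef]
      simp only
      congr 1
      apply Finset.sum_congr rfl
      intro i _
      rw [hmul i]
      congr 1
      ring
    have hmin' : φ 0 + g (β + e) ≤ φ t + g (β + e + t • d) := by
      have hb := hmin (β + e + t • d)
      rw [← hφt, ← hφ0] at hb
      exact hb
    have hg : g (β + e + t • d)
        ≤ (1 - t) * g (β + e) + t * g (β + e + d) - τ / 2 * (t * (1 - t)) * ∑ j, d j ^ 2 := by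
      have hcx := hgconv.2 (Set.mem_univ (β + e)) (Set.mem_univ (β + e + d))
        (by linarith : (0 : ℝ) ≤ 1 - t) (le_of_lt ht0) (by ring)
      have hpt : (1 - t) • (β + e) + t • (β + e + d) = β + e + t • d := by
        funext j; simp [smul_eq_mul]; ring
      simp only [smul_eq_mul] at hcx
      rw [hpt] at hcx
      have hsq : ∑ j, (β + e + t • d) j ^ 2
          = (1 - t) * ∑ j, (β + e) j ^ 2 + t * ∑ j, (β + e + d) j ^ 2
            - t * (1 - t) * ∑ j, d j ^ 2 := by
        rw [Finset.mul_sum, Finset.mul_sum, Finset.mul_sum, ← Finset.sum_add_distrib,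
          ← Finset.sum_sub_distrib]
        apply Finset.sum_congr rfl
        intro j _
        simp [smul_eq_mul]
        ring
      rw [hsq] at hcx
      nlinarith [hcx]
    have hφlb : t * (g (β + e) - g (β + e + d) + τ / 2 * (1 - t) * ∑ j, d j ^ 2)
        ≤ φ t - φ 0 := by nlinarith [hmin', hg]
    rw [slope_def_field, sub_zero, le_div_iff₀ ht0]
    nlinarith [hφlb]
  have T1 : Tendsto (slope φ 0) (nhdsWithin 0 (Set.Ioi (0:ℝ)))
      (nhds ((1 / (n : ℝ)) * ∑ i, ψ (ε i - M.mulVec e i) * -(M.mulVec d i))) := by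
    refine (hasDerivAt_iff_tendsto_slope.mp hder).mono_left (nhdsWithin_mono _ ?_)
    intro x hx
    exact Set.mem_compl_singleton_iff.mpr (ne_of_gt hx)
  have T2 : Tendsto (fun t : ℝ => g (β + e) - g (β + e + d) + τ / 2 * (1 - t) * ∑ j, d j ^ 2)
      (nhdsWithin 0 (Set.Ioi (0:ℝ)))
      (nhds (g (β + e) - g (β + e + d) + τ / 2 * ∑ j, d j ^ 2)) := by
    have hc : Continuous fun t : ℝ =>
        g (β + e) - g (β + e + d) + τ / 2 * (1 - t) * ∑ j, d j ^ 2 := by continuity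
    have h2 := (hc.tendsto 0).mono_left (nhdsWithin_le_nhds (s := Set.Ioi (0:ℝ)))
    simpa using h2
  have hev : ∀ᶠ t in nhdsWithin (0:ℝ) (Set.Ioi (0:ℝ)),
      g (β + e) - g (β + e + d) + τ / 2 * (1 - t) * ∑ j, d j ^ 2 ≤ slope φ 0 t := by
    filter_upwards [Ioo_mem_nhdsGT_of_mem (Set.mem_Ico.mpr ⟨le_refl (0:ℝ), zero_lt_one⟩)] with t ht
    exact key t ht
  exact le_of_tendsto_of_tendsto T2 T1 hev

/-- Rank-one perturbation stability of the regularized M-estimator: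
`nτ‖β̂(ε,X+ηaᵀ)-β̂(ε,X)‖² + L⁻¹‖ψ̂(ε,X+ηaᵀ)-ψ̂(ε,X)‖²
  ≤ (nτ)⁻¹‖a‖²(ηᵀψ̂)² + L(hᵀa)²‖η‖²`. -/
theorem stmt18 {n p : ℕ} (hn : 0 < n)
    (ρ ψ : ℝ → ℝ) (L : NNReal) (hL : (0 : ℝ) < L)
    (hρconv : ConvexOn ℝ Set.univ ρ)
    (hρderiv : ∀ x, HasDerivAt ρ (ψ x) x)
    (hψlip : LipschitzWith L ψ)
    (g : (Fin p → ℝ) → ℝ) (τ : ℝ) (hτ : 0 < τ)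
    (hgconv : ConvexOn ℝ Set.univ (fun b => g b - τ / 2 * ∑ j, b j ^ 2))
    (β : Fin p → ℝ)
    (ε η : Fin n → ℝ) (a : Fin p → ℝ) (X : Matrix (Fin n) (Fin p) ℝ)
    -- `h` is the error of the M-estimator for design `X`, `ht` for design `X + ηaᵀ`
    (h ht : Fin p → ℝ)
    (hmin : ∀ b : Fin p → ℝ,
      (1 / (n : ℝ)) * (∑ i, ρ (ε i - X.mulVec h i)) + g (β + h)
        ≤ (1 / (n : ℝ)) * (∑ i, ρ (ε i - X.mulVec (b - β) i)) + g b)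
    (hmint : ∀ b : Fin p → ℝ,
      (1 / (n : ℝ)) * (∑ i, ρ (ε i - (X + vecMulVec η a).mulVec ht i)) + g (β + ht)
        ≤ (1 / (n : ℝ)) * (∑ i, ρ (ε i - (X + vecMulVec η a).mulVec (b - β) i)) + g b) :
    (n : ℝ) * τ * (∑ j, (ht j - h j) ^ 2)
      + (L : ℝ)⁻¹ *
          (∑ i, (ψ (ε i - (X + vecMulVec η a).mulVec ht i) - ψ (ε i - X.mulVec h i)) ^ 2)
      ≤ ((n : ℝ) * τ)⁻¹ * (∑ j, a j ^ 2) *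
          (∑ i, η i * ψ (ε i - X.mulVec h i)) ^ 2
        + (L : ℝ) * (∑ j, h j * a j) ^ 2 * (∑ i, η i ^ 2) := by
  have hn' : (0 : ℝ) < (n : ℝ) := by exact_mod_cast hn
  -- monotonicity of ψ
  have hmono : ∀ x y : ℝ, x ≤ y → ψ x ≤ ψ y := by
    intro x y hxy
    rcases eq_or_lt_of_le hxy with rfl | hlt
    · exact le_refl _
    · have h1 := hρconv.le_slope_of_hasDerivAt (Set.mem_univ x) (Set.mem_univ y) hlt (hρderiv x)
      have h2 := hρconv.slope_le_of_hasDerivAt (Set.mem_univ x) (Set.mem_univ y) hlt (hρderiv y)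
      linarith
  -- scalar co-coercivity
  have hcoco : ∀ x y : ℝ, (ψ y - ψ x) ^ 2 ≤ (L : ℝ) * ((ψ y - ψ x) * (y - x)) := by
    have main : ∀ x y : ℝ, x ≤ y → (ψ y - ψ x) ^ 2 ≤ (L : ℝ) * ((ψ y - ψ x) * (y - x)) := by
      intro x y hxy
      have hd0 : 0 ≤ ψ y - ψ x := by linarith [hmono x y hxy]
      have hdle : ψ y - ψ x ≤ (L : ℝ) * (y - x) := by
        have hdist := hψlip.dist_le_mul x y
        rw [Real.dist_eq, Real.dist_eq] at hdist
        have h1 : ψ y - ψ x ≤ |ψ x - ψ y| := by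
          rw [abs_sub_comm]; exact le_abs_self _
        have h2 : |x - y| = y - x := by
          rw [abs_sub_comm]; exact abs_of_nonneg (by linarith)
        rw [h2] at hdist
        linarith
      nlinarith
    intro x y
    rcases le_total x y with hxy | hyx
    · exact main x y hxy
    · have := main y x hyx
      nlinarith [this]
  set Xt := X + vecMulVec η a with hXtdef
  set S := ∑ j, (ht j - h j) ^ 2 with hSdef
  set A := ∑ j, a j ^ 2 with hAdef
  set E := ∑ i, η i ^ 2 with hEdef
  set c := ∑ j, h j * a j with hcdef
  set ct := ∑ j, ht j * a j with hctdef
  set q := ∑ i, η i * ψ (ε i - X.mulVec h i) with hqdef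
  set qt := ∑ i, η i * ψ (ε i - Xt.mulVec ht i) with hqtdef
  set P := ∑ i, (ψ (ε i - Xt.mulVec ht i) - ψ (ε i - X.mulVec h i)) ^ 2 with hPdef
  set W := ∑ i, (ψ (ε i - Xt.mulVec ht i) - ψ (ε i - X.mulVec h i))
      * ((ε i - Xt.mulVec ht i) - (ε i - X.mulVec h i)) with hWdef
  -- rank-one action
  have hrank : ∀ (v : Fin p → ℝ) (i : Fin n),
      (vecMulVec η a).mulVec v i = η i * ∑ j, v j * a j := by
    intro v i
    rw [Finset.mul_sum]
    simp only [Matrix.mulVec, dotProduct, Matrix.vecMulVec_apply]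
    apply Finset.sum_congr rfl
    intro j _
    ring
  -- the two variational inequalities
  have K1 := varineq_aux ρ ψ hρderiv g τ hgconv β ε X h (ht - h) hmin
  have e1 : β + h + (ht - h) = β + ht := by abel
  rw [e1] at K1
  have e2 : ∑ j, ((ht - h) j) ^ 2 = S := by
    rw [hSdef]; apply Finset.sum_congr rfl; intro j _; simp
  rw [e2] at K1
  have K2 := varineq_aux ρ ψ hρderiv g τ hgconv β ε Xt ht (h - ht) hmint
  have e3 : β + ht + (h - ht) = β + h := by abel
  rw [e3] at K2
  have e4 : ∑ j, ((h - ht) j) ^ 2 = S := by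
    rw [hSdef]; apply Finset.sum_congr rfl; intro j _; simp; ring
  rw [e4] at K2
  -- design identities
  have hXd : ∀ i, X.mulVec (ht - h) i
      = (ε i - X.mulVec h i) - (ε i - Xt.mulVec ht i) - η i * ct := by
    intro i
    have h1 : Xt.mulVec ht i = X.mulVec ht i + η i * ct := by
      rw [hXtdef, Matrix.add_mulVec]
      simp only [Pi.add_apply]
      rw [hrank ht i, hctdef]
    rw [Matrix.mulVec_sub]
    simp only [Pi.sub_apply]
    linarith [h1]
  have hXtd : ∀ i, Xt.mulVec (h - ht) i
      = (ε i - Xt.mulVec ht i) - (ε i - X.mulVec h i) + η i * c := by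
    intro i
    have h2 : Xt.mulVec h i = X.mulVec h i + η i * c := by
      rw [hXtdef, Matrix.add_mulVec]
      simp only [Pi.add_apply]
      rw [hrank h i, hcdef]
    rw [Matrix.mulVec_sub]
    simp only [Pi.sub_apply]
    linarith [h2]
  -- combine the sums
  have E0 : (∑ i, ψ (ε i - X.mulVec h i) * -(X.mulVec (ht - h) i))
        + (∑ i, ψ (ε i - Xt.mulVec ht i) * -(Xt.mulVec (h - ht) i))
      = -W + ct * q - c * qt := by
    rw [hWdef, hqdef, hqtdef, ← Finset.sum_add_distrib, Finset.mul_sum, Finset.mul_sum,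
      ← Finset.sum_neg_distrib, ← Finset.sum_add_distrib, ← Finset.sum_sub_distrib]
    apply Finset.sum_congr rfl
    intro i _
    rw [hXd i, hXtd i]
    ring
  have HK : τ * S ≤ (1 / (n : ℝ)) * (-W + ct * q - c * qt) := by
    rw [← E0]
    linarith [K1, K2]
  have HK2 : (n : ℝ) * τ * S ≤ -W + ct * q - c * qt := by
    have h3 := mul_le_mul_of_nonneg_left HK (le_of_lt hn')
    calc (n : ℝ) * τ * S = (n : ℝ) * (τ * S) := by ring
      _ ≤ (n : ℝ) * ((1 / (n : ℝ)) * (-W + ct * q - c * qt)) := h3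
      _ = (-W + ct * q - c * qt) := by
          rw [← mul_assoc, mul_one_div, div_self hn'.ne', one_mul]
  -- co-coercivity summed
  have hPW : P ≤ (L : ℝ) * W := by
    rw [hPdef, hWdef, Finset.mul_sum]
    apply Finset.sum_le_sum
    intro i _
    exact hcoco (ε i - X.mulVec h i) (ε i - Xt.mulVec ht i)
  have hLP : (L : ℝ)⁻¹ * P ≤ W := by
    rw [inv_mul_le_iff₀ hL]
    exact hPW
  -- Cauchy-Schwarz
  have CS1 : (ct - c) ^ 2 ≤ S * A := by
    have hc1 : ct - c = ∑ j, (ht j - h j) * a j := by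
      rw [hctdef, hcdef, ← Finset.sum_sub_distrib]
      apply Finset.sum_congr rfl
      intro j _
      ring
    rw [hc1, hSdef, hAdef]
    exact Finset.sum_mul_sq_le_sq_mul_sq _ _ _
  have CS2 : (qt - q) ^ 2 ≤ P * E := by
    have hc2 : qt - q = ∑ i,
        (ψ (ε i - Xt.mulVec ht i) - ψ (ε i - X.mulVec h i)) * η i := by
      rw [hqtdef, hqdef, ← Finset.sum_sub_distrib]
      apply Finset.sum_congr rfl
      intro i _
      ring
    rw [hc2, hPdef, hEdef]
    exact Finset.sum_mul_sq_le_sq_mul_sq _ _ _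
  -- nonnegativity
  have hS0 : 0 ≤ S := by rw [hSdef]; exact Finset.sum_nonneg fun j _ => sq_nonneg _
  have hA0 : 0 ≤ A := by rw [hAdef]; exact Finset.sum_nonneg fun j _ => sq_nonneg _
  have hE0 : 0 ≤ E := by rw [hEdef]; exact Finset.sum_nonneg fun i _ => sq_nonneg _
  have hP0 : 0 ≤ P := by rw [hPdef]; exact Finset.sum_nonneg fun i _ => sq_nonneg _
  have hnt : 0 < (n : ℝ) * τ := mul_pos hn' hτ
  have AM1 := amgm_aux (q := q) hnt hS0 hA0 CS1
  have AM2 := amgm_aux (q := -c) (inv_pos.mpr hL) hP0 hE0 CS2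
  rw [inv_inv, neg_sq] at AM2
  linarith [HK2, hLP, AM1, AM2]
end
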